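/- Let ≿₁ and ≿₂ be two IB preferences on 𝓕 with utility indices u₁, u₂ and maximal families 𝒫₁*, 𝒬₁* and 𝒫₂*, 𝒬₂*. Then the following are equivalent: (i) ≿₁ is more ambiguity averse than ≿₂ (i.e., for all f ∈ 𝓕 and x ∈ X, x ≿₂ f implies x ≿₁ f); (ii) u₁ and u₂ are positive affine transformations of each other and, after normalizing so that u₁ = u₂, 𝒫₁* ⊆ 𝒫₂*; (iii) u₁ and u₂ are positive affine transformations of each other and, after normalizing so that u₁ = u₂, 𝒬₁* ⊇ 𝒬₂*. -/

import Mathlib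

open scoped Pointwise
open MeasureTheory

namespace Paper

variable {S V : Type*}

/-- An algebra of subsets of `S` (the events `Σ`). -/
structure IsSetAlg (𝓐 : Set (Set S)) : Prop where
  empty_mem : ∅ ∈ 𝓐
  compl_mem : ∀ A ∈ 𝓐, Aᶜ ∈ 𝓐
  union_mem : ∀ A ∈ 𝓐, ∀ B ∈ 𝓐, A ∪ B ∈ 𝓐

/-- `B₀(Σ)`: real-valued `Σ`-measurable simple functions. -/
def IsSimpleFn (𝓐 : Set (Set S)) (φ : S → ℝ) : Prop :=
  (Set.range φ).Finite ∧ ∀ t : ℝ, φ ⁻¹' {t} ∈ 𝓐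

open Classical in
/-- The integral of a simple function with respect to a finitely additive set function. -/
noncomputable def fint (p : Set S → ℝ) (φ : S → ℝ) : ℝ :=
  if h : (Set.range φ).Finite then ∑ t ∈ h.toFinset, t * p (φ ⁻¹' {t}) else 0

/-- `Δ`: the finitely additive probabilities on `Σ` (canonically extended by `0` off `Σ`). -/
def Δset (𝓐 : Set (Set S)) : Set (Set S → ℝ) :=
  {p | p Set.univ = 1 ∧ (∀ A ∈ 𝓐, 0 ≤ p A) ∧
    (∀ A ∈ 𝓐, ∀ B ∈ 𝓐, Disjoint A B → p (A ∪ B) = p A + p B) ∧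
    ∀ A : Set S, A ∉ 𝓐 → p A = 0}

/-- The weak* topology `σ(Δ, B₀(Σ))`, i.e. the topology induced by the evaluation maps
`p ↦ ∫ φ dp`, `φ ∈ B₀(Σ)`. -/
noncomputable def weakStar (𝓐 : Set (Set S)) : TopologicalSpace (Set S → ℝ) :=
  TopologicalSpace.induced
    (fun p => fun φ : {φ : S → ℝ // IsSimpleFn 𝓐 φ} => fint p φ.1)
    Pi.topologicalSpace

/-- `𝒞`: the weak*-lower semicontinuous convex functions `c : Δ → (-∞, ∞]`. -/
def Cscr (𝓐 : Set (Set S)) : Set ((Set S → ℝ) → EReal) :=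
  {c | (∀ p ∈ Δset 𝓐, ⊥ < c p) ∧
    (@LowerSemicontinuousOn (Set S → ℝ) EReal (weakStar 𝓐) _ c (Δset 𝓐)) ∧
    ∀ p ∈ Δset 𝓐, ∀ q ∈ Δset 𝓐, ∀ a b : ℝ, 0 ≤ a → 0 ≤ b → a + b = 1 →
      c (a • p + b • q) ≤ (a : EReal) * c p + (b : EReal) * c q}

/-- A subset `C ⊆ 𝒞` is grounded if `sup_{c ∈ C} min_{p ∈ Δ} c p = 0`. -/
def Grounded (𝓐 : Set (Set S)) (C : Set ((Set S → ℝ) → EReal)) : Prop :=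
  (⨆ c ∈ C, ⨅ p ∈ Δset 𝓐, c p) = 0

/-- `min_{p ∈ Δ} (∫ φ dp + c p)`. -/
noncomputable def minVal (𝓐 : Set (Set S)) (c : (Set S → ℝ) → EReal) (φ : S → ℝ) : EReal :=
  ⨅ p ∈ Δset 𝓐, ((fint p φ : EReal) + c p)

/-- `max_{q ∈ Δ} (∫ φ dq - b q)`. -/
noncomputable def maxVal (𝓐 : Set (Set S)) (b : (Set S → ℝ) → EReal) (φ : S → ℝ) : EReal :=
  ⨆ q ∈ Δset 𝓐, ((fint q φ : EReal) - b q)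

/-- `max_{c ∈ C} min_{p ∈ Δ} (∫ φ dp + c p)`. -/
noncomputable def maxminVal (𝓐 : Set (Set S)) (C : Set ((Set S → ℝ) → EReal))
    (φ : S → ℝ) : EReal :=
  ⨆ c ∈ C, minVal 𝓐 c φ

/-- `min_{b ∈ B} max_{q ∈ Δ} (∫ φ dq - b q)`. -/
noncomputable def minmaxVal (𝓐 : Set (Set S)) (B : Set ((Set S → ℝ) → EReal))
    (φ : S → ℝ) : EReal :=
  ⨅ b ∈ B, maxVal 𝓐 b φ

/-- `min_{p ∈ P} ∫ φ dp`. -/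
noncomputable def minPVal (P : Set (Set S → ℝ)) (φ : S → ℝ) : EReal :=
  ⨅ p ∈ P, (fint p φ : EReal)

/-- `max_{q ∈ Q} ∫ φ dq`. -/
noncomputable def maxQVal (Q : Set (Set S → ℝ)) (φ : S → ℝ) : EReal :=
  ⨆ q ∈ Q, (fint q φ : EReal)

/-- `max_{P ∈ Pfam} min_{p ∈ P} ∫ φ dp`. -/
noncomputable def maxminPVal (Pfam : Set (Set (Set S → ℝ))) (φ : S → ℝ) : EReal :=
  ⨆ P ∈ Pfam, minPVal P φ

/-- `min_{Q ∈ Qfam} max_{q ∈ Q} ∫ φ dq`. -/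
noncomputable def minmaxQVal (Qfam : Set (Set (Set S → ℝ))) (φ : S → ℝ) : EReal :=
  ⨅ Q ∈ Qfam, maxQVal Q φ

open Classical in
/-- The convex-analytic indicator `δ_P` of a set `P`. -/
noncomputable def ind (P : Set (Set S → ℝ)) : (Set S → ℝ) → EReal :=
  fun p => if p ∈ P then (0 : EReal) else ⊤

variable [AddCommGroup V] [Module ℝ V]

/-- `𝓕`: the simple acts, i.e. `Σ`-measurable maps `f : S → X` with finitely many values. -/
def Acts (𝓐 : Set (Set S)) (X : Set V) : Set (S → V) :=
  {f | (∀ s, f s ∈ X) ∧ (Set.range f).Finite ∧ ∀ v : V, f ⁻¹' {v} ∈ 𝓐}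

/-- The constant act with value `x`. -/
def constAct (x : V) : S → V := fun _ : S => x

/-- The mixture `α f + (1 - α) g` of two acts, defined statewise. -/
def mix (α : ℝ) (f g : S → V) : S → V := fun s => α • f s + (1 - α) • g s

/-- The statewise utility `u ∘ f` of an act. -/
def uAct (u : V → ℝ) (f : S → V) : S → ℝ := fun s => u (f s)

/-- `u : X → ℝ` is nonconstant and affine on `X`. -/
def IsNonconstAffine (X : Set V) (u : V → ℝ) : Prop :=
  (∀ x ∈ X, ∀ y ∈ X, ∀ t ∈ Set.Icc (0 : ℝ) 1,
      u (t • x + (1 - t) • y) = t * u x + (1 - t) * u y) ∧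
  ∃ x ∈ X, ∃ y ∈ X, u x ≠ u y

/-- A niveloidal preference: Axioms A1 (weak order), A2 (monotonicity), A3 (Archimedean)
and A4 (weak C-independence). -/
structure NiveloidalPref (𝓐 : Set (Set S)) (X : Set V)
    (R : (S → V) → (S → V) → Prop) : Prop where
  nontrivial : ∃ f ∈ Acts 𝓐 X, ∃ g ∈ Acts 𝓐 X, R f g ∧ ¬ R g f
  complete : ∀ f ∈ Acts 𝓐 X, ∀ g ∈ Acts 𝓐 X, R f g ∨ R g f
  transitive : ∀ f ∈ Acts 𝓐 X, ∀ g ∈ Acts 𝓐 X, ∀ h ∈ Acts 𝓐 X, R f g → R g h → R f h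
  monotone : ∀ f ∈ Acts 𝓐 X, ∀ g ∈ Acts 𝓐 X,
    (∀ s : S, R (constAct (f s)) (constAct (g s))) → R f g
  archimedean : ∀ f ∈ Acts 𝓐 X, ∀ g ∈ Acts 𝓐 X, ∀ h ∈ Acts 𝓐 X,
    (R f g ∧ ¬ R g f) → (R g h ∧ ¬ R h g) →
    ∃ α ∈ Set.Ioo (0 : ℝ) 1, ∃ β ∈ Set.Ioo (0 : ℝ) 1,
      (R (mix α f h) g ∧ ¬ R g (mix α f h)) ∧
      (R g (mix β f h) ∧ ¬ R (mix β f h) g)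
  weakCIndep : ∀ f ∈ Acts 𝓐 X, ∀ g ∈ Acts 𝓐 X, ∀ x ∈ X, ∀ y ∈ X,
    ∀ α ∈ Set.Ioo (0 : ℝ) 1,
    R (mix α f (constAct x)) (mix α g (constAct x)) →
    R (mix α f (constAct y)) (mix α g (constAct y))

/-- An invariant biseparable preference: Axioms A1 (weak order), A2 (monotonicity),
A3 (Archimedean) and A7 (C-independence). -/
structure IBPref (𝓐 : Set (Set S)) (X : Set V)
    (R : (S → V) → (S → V) → Prop) : Prop where
  nontrivial : ∃ f ∈ Acts 𝓐 X, ∃ g ∈ Acts 𝓐 X, R f g ∧ ¬ R g f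
  complete : ∀ f ∈ Acts 𝓐 X, ∀ g ∈ Acts 𝓐 X, R f g ∨ R g f
  transitive : ∀ f ∈ Acts 𝓐 X, ∀ g ∈ Acts 𝓐 X, ∀ h ∈ Acts 𝓐 X, R f g → R g h → R f h
  monotone : ∀ f ∈ Acts 𝓐 X, ∀ g ∈ Acts 𝓐 X,
    (∀ s : S, R (constAct (f s)) (constAct (g s))) → R f g
  archimedean : ∀ f ∈ Acts 𝓐 X, ∀ g ∈ Acts 𝓐 X, ∀ h ∈ Acts 𝓐 X,
    (R f g ∧ ¬ R g f) → (R g h ∧ ¬ R h g) →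
    ∃ α ∈ Set.Ioo (0 : ℝ) 1, ∃ β ∈ Set.Ioo (0 : ℝ) 1,
      (R (mix α f h) g ∧ ¬ R g (mix α f h)) ∧
      (R g (mix β f h) ∧ ¬ R (mix β f h) g)
  cIndep : ∀ f ∈ Acts 𝓐 X, ∀ g ∈ Acts 𝓐 X, ∀ x ∈ X, ∀ α ∈ Set.Ioo (0 : ℝ) 1,
    (R f g ↔ R (mix α f (constAct x)) (mix α g (constAct x)))

/-- Axiom A5 (uncertainty aversion). -/
def UncertaintyAverse (𝓐 : Set (Set S)) (X : Set V)
    (R : (S → V) → (S → V) → Prop) : Prop :=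
  ∀ f ∈ Acts 𝓐 X, ∀ g ∈ Acts 𝓐 X, ∀ α ∈ Set.Ioo (0 : ℝ) 1,
    R f g → R g f → R (mix α f g) f

/-- `xf` assigns to every act a certainty equivalent. -/
def IsCE (𝓐 : Set (Set S)) (X : Set V) (R : (S → V) → (S → V) → Prop)
    (xf : (S → V) → V) : Prop :=
  ∀ f ∈ Acts 𝓐 X, xf f ∈ X ∧ R f (constAct (xf f)) ∧ R (constAct (xf f)) f

/-- `C*`: the maximal candidate set of penalty functions. -/
def CstarOf (𝓐 : Set (Set S)) (X : Set V) (u : V → ℝ) (xf : (S → V) → V) :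
    Set ((Set S → ℝ) → EReal) :=
  {c | c ∈ Cscr 𝓐 ∧ ∀ f ∈ Acts 𝓐 X, minVal 𝓐 c (uAct u f) ≤ (u (xf f) : EReal)}

/-- `B*`: the maximal candidate set of reward functions. -/
def BstarOf (𝓐 : Set (Set S)) (X : Set V) (u : V → ℝ) (xf : (S → V) → V) :
    Set ((Set S → ℝ) → EReal) :=
  {b | b ∈ Cscr 𝓐 ∧ ∀ f ∈ Acts 𝓐 X, (u (xf f) : EReal) ≤ maxVal 𝓐 b (uAct u f)}

/-- `Pfam*`: the maximal family of prior sets (maxmin form). -/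
def PstarOf (𝓐 : Set (Set S)) (X : Set V) (u : V → ℝ) (xf : (S → V) → V) :
    Set (Set (Set S → ℝ)) :=
  {P | P ⊆ Δset 𝓐 ∧ P.Nonempty ∧ Convex ℝ P ∧ (@IsCompact _ (weakStar 𝓐) P) ∧
    ∀ f ∈ Acts 𝓐 X, minPVal P (uAct u f) ≤ (u (xf f) : EReal)}

/-- `Qfam*`: the maximal family of prior sets (minmax form). -/
def QstarOf (𝓐 : Set (Set S)) (X : Set V) (u : V → ℝ) (xf : (S → V) → V) :
    Set (Set (Set S → ℝ)) :=
  {Q | Q ⊆ Δset 𝓐 ∧ Q.Nonempty ∧ Convex ℝ Q ∧ (@IsCompact _ (weakStar 𝓐) Q) ∧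
    ∀ f ∈ Acts 𝓐 X, (u (xf f) : EReal) ≤ maxQVal Q (uAct u f)}

/-- `C` yields the maxmin representation of `R` with utility `u`. -/
def MaxminRep (𝓐 : Set (Set S)) (X : Set V) (R : (S → V) → (S → V) → Prop)
    (u : V → ℝ) (C : Set ((Set S → ℝ) → EReal)) : Prop :=
  ∀ f ∈ Acts 𝓐 X, ∀ g ∈ Acts 𝓐 X,
    (R f g ↔ maxminVal 𝓐 C (uAct u g) ≤ maxminVal 𝓐 C (uAct u f))

/-- All indicated maxima over `C` and minima over `Δ` are attained. -/
def MaxminAttained (𝓐 : Set (Set S)) (X : Set V) (u : V → ℝ)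
    (C : Set ((Set S → ℝ) → EReal)) : Prop :=
  ∀ f ∈ Acts 𝓐 X,
    (∀ c ∈ C, ∃ p ∈ Δset 𝓐,
      minVal 𝓐 c (uAct u f) = (fint p (uAct u f) : EReal) + c p) ∧
    ∃ c ∈ C, maxminVal 𝓐 C (uAct u f) = minVal 𝓐 c (uAct u f)

/-- `B` yields the minmax representation of `R` with utility `u`. -/
def MinmaxRep (𝓐 : Set (Set S)) (X : Set V) (R : (S → V) → (S → V) → Prop)
    (u : V → ℝ) (B : Set ((Set S → ℝ) → EReal)) : Prop :=
  ∀ f ∈ Acts 𝓐 X, ∀ g ∈ Acts 𝓐 X,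
    (R f g ↔ minmaxVal 𝓐 B (uAct u g) ≤ minmaxVal 𝓐 B (uAct u f))

/-- All indicated minima over `B` and maxima over `Δ` are attained. -/
def MinmaxAttained (𝓐 : Set (Set S)) (X : Set V) (u : V → ℝ)
    (B : Set ((Set S → ℝ) → EReal)) : Prop :=
  ∀ f ∈ Acts 𝓐 X,
    (∀ b ∈ B, ∃ q ∈ Δset 𝓐,
      maxVal 𝓐 b (uAct u f) = (fint q (uAct u f) : EReal) - b q) ∧
    ∃ b ∈ B, minmaxVal 𝓐 B (uAct u f) = maxVal 𝓐 b (uAct u f)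

/-- A family of nonempty, convex, weak*-compact subsets of `Δ`. -/
def IsPriorFamily (𝓐 : Set (Set S)) (Pfam : Set (Set (Set S → ℝ))) : Prop :=
  Pfam.Nonempty ∧ ∀ P ∈ Pfam,
    P ⊆ Δset 𝓐 ∧ P.Nonempty ∧ Convex ℝ P ∧ (@IsCompact _ (weakStar 𝓐) P)

/-- `Pfam` yields the maxmin representation of `R` with utility `u`. -/
def PRep (𝓐 : Set (Set S)) (X : Set V) (R : (S → V) → (S → V) → Prop)
    (u : V → ℝ) (Pfam : Set (Set (Set S → ℝ))) : Prop :=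
  ∀ f ∈ Acts 𝓐 X, ∀ g ∈ Acts 𝓐 X,
    (R f g ↔ maxminPVal Pfam (uAct u g) ≤ maxminPVal Pfam (uAct u f))

/-- All indicated maxima over `Pfam` and minima over `P` are attained. -/
def PAttained (𝓐 : Set (Set S)) (X : Set V) (u : V → ℝ)
    (Pfam : Set (Set (Set S → ℝ))) : Prop :=
  ∀ f ∈ Acts 𝓐 X,
    (∀ P ∈ Pfam, ∃ p ∈ P, minPVal P (uAct u f) = (fint p (uAct u f) : EReal)) ∧
    ∃ P ∈ Pfam, maxminPVal Pfam (uAct u f) = minPVal P (uAct u f)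

/-- `Qfam` yields the minmax representation of `R` with utility `u`. -/
def QRep (𝓐 : Set (Set S)) (X : Set V) (R : (S → V) → (S → V) → Prop)
    (u : V → ℝ) (Qfam : Set (Set (Set S → ℝ))) : Prop :=
  ∀ f ∈ Acts 𝓐 X, ∀ g ∈ Acts 𝓐 X,
    (R f g ↔ minmaxQVal Qfam (uAct u g) ≤ minmaxQVal Qfam (uAct u f))

/-- All indicated minima over `Qfam` and maxima over `Q` are attained. -/
def QAttained (𝓐 : Set (Set S)) (X : Set V) (u : V → ℝ)
    (Qfam : Set (Set (Set S → ℝ))) : Prop :=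
  ∀ f ∈ Acts 𝓐 X,
    (∀ Q ∈ Qfam, ∃ q ∈ Q, maxQVal Q (uAct u f) = (fint q (uAct u f) : EReal)) ∧
    ∃ Q ∈ Qfam, minmaxQVal Qfam (uAct u f) = maxQVal Q (uAct u f)

/-- `c₁ ≈_u c₂`: `c₁` and `c₂` induce the same variational functional on `B₀(Σ, u(X))`. -/
def ApproxEq (𝓐 : Set (Set S)) (X : Set V) (u : V → ℝ)
    (c₁ c₂ : (Set S → ℝ) → EReal) : Prop :=
  ∀ φ : S → ℝ, IsSimpleFn 𝓐 φ → (∀ s, φ s ∈ u '' X) →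
    minVal 𝓐 c₁ φ = minVal 𝓐 c₂ φ

/-- `R₁` is more ambiguity averse than `R₂`. -/
def MoreAmbiguityAverse (𝓐 : Set (Set S)) (X : Set V)
    (R₁ R₂ : (S → V) → (S → V) → Prop) : Prop :=
  ∀ f ∈ Acts 𝓐 X, ∀ x ∈ X, R₂ (constAct x) f → R₁ (constAct x) f

/-- `u₁` and `u₂` are positive affine transformations of each other on `X`. -/
def CardEquiv (X : Set V) (u₁ u₂ : V → ℝ) : Prop :=
  ∃ a b : ℝ, 0 < a ∧ ∀ x ∈ X, u₂ x = a * u₁ x + b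

/-- A capacity on `(S, Σ)`. -/
def IsCapacity (𝓐 : Set (Set S)) (π : Set S → ℝ) : Prop :=
  π ∅ = 0 ∧ π Set.univ = 1 ∧ ∀ A ∈ 𝓐, ∀ B ∈ 𝓐, A ⊆ B → π A ≤ π B

/-- The Choquet integral of a (simple) function against a capacity. -/
noncomputable def choquet (π : Set S → ℝ) (φ : S → ℝ) : ℝ :=
  (∫ t in Set.Ioi (0 : ℝ), π {s | t ≤ φ s}) +
    ∫ t in Set.Iio (0 : ℝ), (π {s | t ≤ φ s} - 1)

section AuxiliaryLemmas

-- ### auxiliary lemmas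

lemma IsSetAlg.univ_mem {𝓐 : Set (Set S)} (hA : IsSetAlg 𝓐) : Set.univ ∈ 𝓐 := by
  simpa using hA.compl_mem ∅ hA.empty_mem

lemma IsSetAlg.biUnion_mem {𝓐 : Set (Set S)} (hA : IsSetAlg 𝓐) {ι : Type*}
    (T : Finset ι) (A : ι → Set S) (h : ∀ i ∈ T, A i ∈ 𝓐) :
    (⋃ i ∈ T, A i) ∈ 𝓐 := by
  classical
  induction T using Finset.induction_on with
  | empty => simpa using hA.empty_mem
  | insert a T' hnot ih =>
      rw [Finset.set_biUnion_insert]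
      exact hA.union_mem _ (h a (Finset.mem_insert_self a T'))
        _ (ih fun i hi => h i (Finset.mem_insert_of_mem hi))

lemma fint_eq {p : Set S → ℝ} {φ : S → ℝ} (h : (Set.range φ).Finite) :
    fint p φ = ∑ t ∈ h.toFinset, t * p (φ ⁻¹' {t}) := dif_pos h

variable {𝓐 : Set (Set S)} {q : Set S → ℝ}

lemma q_empty (hA : IsSetAlg 𝓐) (hq : q ∈ Δset 𝓐) : q ∅ = 0 := by
  have := hq.2.2.1 ∅ hA.empty_mem ∅ hA.empty_mem (by simp)
  simp at this; linarith

lemma q_le_one (hA : IsSetAlg 𝓐) (hq : q ∈ Δset 𝓐) {A : Set S} (hmem : A ∈ 𝓐) :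
    q A ≤ 1 := by
  have hadd := hq.2.2.1 A hmem Aᶜ (hA.compl_mem A hmem) disjoint_compl_right
  rw [Set.union_compl_self, hq.1] at hadd
  have := hq.2.1 Aᶜ (hA.compl_mem A hmem)
  linarith

/-- additivity over a finite disjoint family of preimages -/
lemma q_sum_preimage (hA : IsSetAlg 𝓐) (hq : q ∈ Δset 𝓐) {φ : S → ℝ}
    (hsf : IsSimpleFn 𝓐 φ) (T : Finset ℝ) :
    q (⋃ t ∈ T, φ ⁻¹' {t}) = ∑ t ∈ T, q (φ ⁻¹' {t}) := by
  classical
  induction T using Finset.induction_on with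
  | empty => simpa using q_empty hA hq
  | insert a T' hnot ih =>
      rw [Finset.set_biUnion_insert, Finset.sum_insert hnot, ← ih]
      refine hq.2.2.1 _ (hsf.2 a) _ (hA.biUnion_mem T' _ fun t _ => hsf.2 t) ?_
      rw [Set.disjoint_left]
      rintro x (hx : φ x = a) hx2
      simp only [Set.mem_iUnion] at hx2
      obtain ⟨t, ht, (hx3 : φ x = t)⟩ := hx2
      exact hnot (by rw [← hx, hx3] at *; exact ht)

lemma sum_preimages (hA : IsSetAlg 𝓐) (hq : q ∈ Δset 𝓐) {φ : S → ℝ}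
    (hsf : IsSimpleFn 𝓐 φ) :
    ∑ t ∈ hsf.1.toFinset, q (φ ⁻¹' {t}) = 1 := by
  rw [← q_sum_preimage hA hq hsf]
  have : (⋃ t ∈ hsf.1.toFinset, φ ⁻¹' {t}) = Set.univ := by
    ext s
    simp only [Set.mem_iUnion, Set.mem_univ, iff_true, Set.mem_preimage,
      Set.mem_singleton_iff, Set.Finite.mem_toFinset]
    exact ⟨φ s, Set.mem_range_self s, rfl⟩
  rw [this, hq.1]

open Classical in
noncomputable def chi (A : Set S) : S → ℝ := fun s => if s ∈ A then 1 else 0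

lemma chi_pre_one (A : Set S) : chi A ⁻¹' {1} = A := by
  ext s; simp only [chi, Set.mem_preimage, Set.mem_singleton_iff]
  split_ifs with h <;> simp [h]

lemma chi_pre (A : Set S) (t : ℝ) :
    chi A ⁻¹' {t} = A ∨ chi A ⁻¹' {t} = Aᶜ ∨ chi A ⁻¹' {t} = ∅ := by
  by_cases h1 : t = 1
  · subst h1; exact Or.inl (chi_pre_one A)
  by_cases h0 : t = 0
  · subst h0; right; left
    ext s; simp only [chi, Set.mem_preimage, Set.mem_singleton_iff, Set.mem_compl_iff]
    split_ifs with h <;> simp [h]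
  · right; right
    ext s; simp only [chi, Set.mem_preimage, Set.mem_singleton_iff]
    split_ifs with h <;> simp [Ne.symm h1, Ne.symm h0]

lemma chi_range_finite (A : Set S) : (Set.range (chi A)).Finite := by
  apply Set.Finite.subset (Set.toFinite ({0, 1} : Set ℝ))
  rintro t ⟨s, rfl⟩
  simp only [chi]; split_ifs <;> simp

lemma chi_simple (hA : IsSetAlg 𝓐) {A : Set S} (hmem : A ∈ 𝓐) :
    IsSimpleFn 𝓐 (chi A) := by
  refine ⟨chi_range_finite A, fun t => ?_⟩
  rcases chi_pre A t with h | h | h <;> rw [h]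
  · exact hmem
  · exact hA.compl_mem A hmem
  · exact hA.empty_mem

lemma fint_chi (hA : IsSetAlg 𝓐) (hq : q ∈ Δset 𝓐) {A : Set S} (hmem : A ∈ 𝓐) :
    fint q (chi A) = q A := by
  classical
  rw [fint_eq (chi_range_finite A)]
  have hsub : (chi_range_finite A).toFinset ⊆ {0, 1} := by
    intro t ht
    rw [Set.Finite.mem_toFinset] at ht
    obtain ⟨s, rfl⟩ := ht
    simp only [chi]; split_ifs <;> simp
  rw [Finset.sum_subset hsub ?van]
  case van =>
    intro t ht hnot
    rcases Finset.mem_insert.1 ht with rfl | h1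
    · simp
    · rw [Finset.mem_singleton] at h1; subst h1
      rw [Set.Finite.mem_toFinset] at hnot
      have hAempty : A = ∅ := by
        by_contra hne
        obtain ⟨s, hs⟩ := Set.nonempty_iff_ne_empty.2 hne
        exact hnot ⟨s, by simp [chi, hs]⟩
      rw [chi_pre_one, hAempty, q_empty hA hq, mul_zero]
  rw [show ({0, 1} : Finset ℝ) = insert (0:ℝ) {1} from rfl,
    Finset.sum_insert (by norm_num), Finset.sum_singleton, chi_pre_one]
  ring


lemma fint_const [Nonempty S] (hq1 : q Set.univ = 1) (c : ℝ) :
    fint q (fun _ : S => c) = c := by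
  have hfin : (Set.range (fun _ : S => c)).Finite := by
    rw [Set.range_const]; exact Set.finite_singleton c
  rw [fint_eq hfin]
  have h1 : hfin.toFinset = {c} := by
    ext t; simp [Set.Finite.mem_toFinset, Set.range_const]
  have h2 : (fun _ : S => c) ⁻¹' {c} = Set.univ := by
    ext s; simp
  rw [h1, Finset.sum_singleton, h2, hq1, mul_one]

lemma fint_affine (hA : IsSetAlg 𝓐) (hq : q ∈ Δset 𝓐) {φ : S → ℝ}
    (hsf : IsSimpleFn 𝓐 φ) {a b : ℝ} (ha : a ≠ 0) :
    fint q (fun s => a * φ s + b) = a * fint q φ + b := by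
  classical
  have hfin : (Set.range (fun s => a * φ s + b)).Finite := by
    have : (fun s => a * φ s + b) = (fun t => a * t + b) ∘ φ := rfl
    rw [this, Set.range_comp]
    exact hsf.1.image _
  rw [fint_eq hfin, fint_eq hsf.1]
  have htf : hfin.toFinset = hsf.1.toFinset.image (fun t => a * t + b) := by
    ext u
    simp only [Set.Finite.mem_toFinset, Finset.mem_image, Set.Finite.mem_toFinset]
    constructor
    · rintro ⟨s, rfl⟩; exact ⟨φ s, ⟨s, rfl⟩, rfl⟩
    · rintro ⟨t, ⟨s, rfl⟩, rfl⟩; exact ⟨s, rfl⟩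
  have hinj : Set.InjOn (fun t => a * t + b) hsf.1.toFinset := by
    intro t1 _ t2 _ h
    simp only at h
    have : a * t1 = a * t2 := by linarith
    exact mul_left_cancel₀ ha this
  rw [htf, Finset.sum_image hinj]
  have hpre : ∀ t : ℝ, (fun s => a * φ s + b) ⁻¹' {a * t + b} = φ ⁻¹' {t} := by
    intro t; ext s
    simp only [Set.mem_preimage, Set.mem_singleton_iff]
    constructor
    · intro h; have : a * φ s = a * t := by linarith
      exact mul_left_cancel₀ ha this
    · intro h; rw [h]
  calc ∑ t ∈ hsf.1.toFinset, (a * t + b) * q ((fun s => a * φ s + b) ⁻¹' {a * t + b})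
      = ∑ t ∈ hsf.1.toFinset, (a * (t * q (φ ⁻¹' {t})) + b * q (φ ⁻¹' {t})) := by
        refine Finset.sum_congr rfl fun t _ => ?_
        rw [hpre t]; ring
    _ = a * ∑ t ∈ hsf.1.toFinset, t * q (φ ⁻¹' {t})
        + b * ∑ t ∈ hsf.1.toFinset, q (φ ⁻¹' {t}) := by
        rw [Finset.sum_add_distrib, Finset.mul_sum, Finset.mul_sum]
    _ = a * ∑ t ∈ hsf.1.toFinset, t * q (φ ⁻¹' {t}) + b := by
        rw [sum_preimages hA hq hsf, mul_one]

lemma fint_smul_add {p q : Set S → ℝ} {φ : S → ℝ} (hfin : (Set.range φ).Finite)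
    (a b : ℝ) :
    fint (a • p + b • q) φ = a * fint p φ + b * fint q φ := by
  rw [fint_eq hfin, fint_eq hfin, fint_eq hfin]
  calc ∑ t ∈ hfin.toFinset, t * (a • p + b • q) (φ ⁻¹' {t})
      = ∑ t ∈ hfin.toFinset, (a * (t * p (φ ⁻¹' {t})) + b * (t * q (φ ⁻¹' {t}))) := by
        refine Finset.sum_congr rfl fun t _ => ?_
        simp only [Pi.add_apply, Pi.smul_apply, smul_eq_mul]
        ring
    _ = _ := by rw [Finset.sum_add_distrib, Finset.mul_sum, Finset.mul_sum]



/-- The simple function `chi A` as an element of the index type of the weak* topology. -/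
noncomputable def chiS (hA : IsSetAlg 𝓐) (A : Set S) (h : A ∈ 𝓐) :
    {φ : S → ℝ // IsSimpleFn 𝓐 φ} :=
  ⟨chi A, chi_simple hA h⟩

lemma compact_constraint (hA : IsSetAlg 𝓐) {φ₀ : S → ℝ} (h₀ : IsSimpleFn 𝓐 φ₀) (c : ℝ) :
    @IsCompact _ (weakStar 𝓐) {q | q ∈ Δset 𝓐 ∧ fint q φ₀ ≤ c} := by
  classical
  letI : TopologicalSpace (Set S → ℝ) := weakStar 𝓐
  set Q : Set (Set S → ℝ) := {q | q ∈ Δset 𝓐 ∧ fint q φ₀ ≤ c} with hQ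
  let Φ := {φ : S → ℝ // IsSimpleFn 𝓐 φ}
  let ι : (Set S → ℝ) → (Φ → ℝ) := fun p => fun φ => fint p φ.1
  have hind : Topology.IsInducing ι := ⟨rfl⟩
  let M : Φ → ℝ := fun φ => ∑ t ∈ φ.2.1.toFinset, |t|
  let K : Set (Φ → ℝ) := Set.univ.pi (fun φ => Set.Icc (-(M φ)) (M φ))
  let C1 : Set (Φ → ℝ) := ⋂ φ : Φ,
    {x | x φ = ∑ t ∈ φ.2.1.toFinset, t * x (chiS hA _ (φ.2.2 t))}
  let C2 : Set (Φ → ℝ) := ⋂ A : Set S, ⋂ h : A ∈ 𝓐, {x | 0 ≤ x (chiS hA A h)}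
  let C3 : Set (Φ → ℝ) := ⋂ A : Set S, ⋂ h1 : A ∈ 𝓐, ⋂ B : Set S, ⋂ h2 : B ∈ 𝓐,
    ⋂ _ : Disjoint A B,
      {x | x (chiS hA (A ∪ B) (hA.union_mem A h1 B h2)) =
        x (chiS hA A h1) + x (chiS hA B h2)}
  let C4 : Set (Φ → ℝ) := {x | x (chiS hA Set.univ hA.univ_mem) = 1}
  let C5 : Set (Φ → ℝ) := {x | x ⟨φ₀, h₀⟩ ≤ c}
  let C : Set (Φ → ℝ) := C1 ∩ C2 ∩ C3 ∩ C4 ∩ C5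
  -- C is closed
  have hCclosed : IsClosed C := by
    refine IsClosed.inter (IsClosed.inter (IsClosed.inter (IsClosed.inter ?_ ?_) ?_) ?_) ?_
    · exact isClosed_iInter fun φ => isClosed_eq (continuous_apply φ)
        (continuous_finset_sum _ fun t _ => continuous_const.mul (continuous_apply _))
    · exact isClosed_iInter fun A => isClosed_iInter fun h =>
        isClosed_le continuous_const (continuous_apply _)
    · exact isClosed_iInter fun A => isClosed_iInter fun h1 =>
        isClosed_iInter fun B => isClosed_iInter fun h2 => isClosed_iInter fun _ =>
          isClosed_eq (continuous_apply _)
            (Continuous.add (continuous_apply _) (continuous_apply _))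
    · exact isClosed_eq (continuous_apply _) continuous_const
    · exact isClosed_le (continuous_apply _) continuous_const
  -- members of C are bounded: C ⊆ K
  have hCK : C ⊆ K := by
    rintro x ⟨⟨⟨⟨hx1, hx2⟩, hx3⟩, hx4⟩, hx5⟩
    simp only [C1, Set.mem_iInter, Set.mem_setOf_eq] at hx1
    simp only [C2, Set.mem_iInter, Set.mem_setOf_eq] at hx2
    simp only [C3, Set.mem_iInter, Set.mem_setOf_eq] at hx3
    have hx4' : x (chiS hA Set.univ hA.univ_mem) = 1 := hx4
    have bound01 : ∀ (A : Set S) (h : A ∈ 𝓐), 0 ≤ x (chiS hA A h) ∧ x (chiS hA A h) ≤ 1 := by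
      intro A h
      refine ⟨hx2 A h, ?_⟩
      have hadd := hx3 A h Aᶜ (hA.compl_mem A h) disjoint_compl_right
      have hchieq : chiS hA (A ∪ Aᶜ) (hA.union_mem A h Aᶜ (hA.compl_mem A h)) =
          chiS hA Set.univ hA.univ_mem := by
        apply Subtype.ext
        simp only [chiS]
        rw [Set.union_compl_self]
      rw [hchieq, hx4'] at hadd
      have := hx2 Aᶜ (hA.compl_mem A h)
      linarith
    intro φ _
    have hphi := hx1 φ
    have habs : |x φ| ≤ M φ := by
      rw [hphi]
      calc |∑ t ∈ φ.2.1.toFinset, t * x (chiS hA _ (φ.2.2 t))|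
          ≤ ∑ t ∈ φ.2.1.toFinset, |t * x (chiS hA _ (φ.2.2 t))| :=
            Finset.abs_sum_le_sum_abs _ _
        _ ≤ ∑ t ∈ φ.2.1.toFinset, |t| := by
            refine Finset.sum_le_sum fun t _ => ?_
            rw [abs_mul]
            have h01 := bound01 _ (φ.2.2 t)
            have : |x (chiS hA _ (φ.2.2 t))| ≤ 1 := abs_le.2 ⟨by linarith [h01.1], h01.2⟩
            calc |t| * |x (chiS hA _ (φ.2.2 t))| ≤ |t| * 1 :=
                  mul_le_mul_of_nonneg_left this (abs_nonneg t)
              _ = |t| := mul_one _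
    exact Set.mem_Icc.2 (abs_le.1 habs)
  -- ι '' Q ⊆ C
  have hQC : ι '' Q ⊆ C := by
    rintro _ ⟨q, ⟨hqΔ, hqc⟩, rfl⟩
    refine ⟨⟨⟨⟨?_, ?_⟩, ?_⟩, ?_⟩, ?_⟩
    · simp only [C1, Set.mem_iInter, Set.mem_setOf_eq]
      intro φ
      show fint q φ.1 = ∑ t ∈ φ.2.1.toFinset, t * fint q (chi (φ.1 ⁻¹' {t}))
      rw [fint_eq φ.2.1]
      exact Finset.sum_congr rfl fun t _ => by
        rw [fint_chi hA hqΔ (φ.2.2 t)]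
    · simp only [C2, Set.mem_iInter, Set.mem_setOf_eq]
      intro A h
      show 0 ≤ fint q (chi A)
      rw [fint_chi hA hqΔ h]
      exact hqΔ.2.1 A h
    · simp only [C3, Set.mem_iInter, Set.mem_setOf_eq]
      intro A h1 B h2 hd
      show fint q (chi (A ∪ B)) = fint q (chi A) + fint q (chi B)
      rw [fint_chi hA hqΔ (hA.union_mem A h1 B h2), fint_chi hA hqΔ h1,
        fint_chi hA hqΔ h2]
      exact hqΔ.2.2.1 A h1 B h2 hd
    · show fint q (chi Set.univ) = 1
      rw [fint_chi hA hqΔ hA.univ_mem]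
      exact hqΔ.1
    · exact hqc
  -- C ⊆ ι '' Q
  have hCQ : C ⊆ ι '' Q := by
    rintro x ⟨⟨⟨⟨hx1, hx2⟩, hx3⟩, hx4⟩, hx5⟩
    simp only [C1, Set.mem_iInter, Set.mem_setOf_eq] at hx1
    simp only [C2, Set.mem_iInter, Set.mem_setOf_eq] at hx2
    simp only [C3, Set.mem_iInter, Set.mem_setOf_eq] at hx3
    have hx4' : x (chiS hA Set.univ hA.univ_mem) = 1 := hx4
    have hx5' : x ⟨φ₀, h₀⟩ ≤ c := hx5
    set p : Set S → ℝ := fun A => if h : A ∈ 𝓐 then x (chiS hA A h) else 0 with hp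
    have hpΔ : p ∈ Δset 𝓐 := by
      refine ⟨?_, ?_, ?_, ?_⟩
      · rw [hp]; simp only [dif_pos hA.univ_mem]; exact hx4'
      · intro A h; rw [hp]; simp only [dif_pos h]; exact hx2 A h
      · intro A h1 B h2 hd; rw [hp]
        simp only [dif_pos h1, dif_pos h2, dif_pos (hA.union_mem A h1 B h2)]
        exact hx3 A h1 B h2 hd
      · intro A h; rw [hp]; simp only [dif_neg h]
    have hfint : ∀ φ : Φ, fint p φ.1 = x φ := by
      intro φ
      rw [fint_eq φ.2.1]
      have : ∀ t : ℝ, p (φ.1 ⁻¹' {t}) = x (chiS hA _ (φ.2.2 t)) := fun t => by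
        rw [hp]; simp only [dif_pos (φ.2.2 t)]
      rw [Finset.sum_congr rfl fun t _ => by rw [this t]]
      exact (hx1 φ).symm
    refine ⟨p, ⟨hpΔ, ?_⟩, funext fun φ => hfint φ⟩
    have := hfint ⟨φ₀, h₀⟩
    simp only at this
    rw [this]
    exact hx5'
  have heq : ι '' Q = C := Set.Subset.antisymm hQC hCQ
  have hKcomp : IsCompact K := isCompact_univ_pi fun φ => isCompact_Icc
  have hCcomp : IsCompact C := by
    have : K ∩ C = C := Set.inter_eq_self_of_subset_right hCK
    rw [← this]
    exact hKcomp.inter_right hCclosed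
  rw [hind.isCompact_iff, heq]
  exact hCcomp



lemma constAct_mem (hA : IsSetAlg 𝓐) {X : Set V} {x : V} (hx : x ∈ X) :
    (constAct x : S → V) ∈ Acts 𝓐 X := by
  refine ⟨fun _ => hx, (Set.finite_singleton x).subset ?_, fun v => ?_⟩
  · rintro y ⟨s, rfl⟩; rfl
  · by_cases h : x = v
    · have : (constAct x : S → V) ⁻¹' {v} = Set.univ := by
        ext s; simp [constAct, h]
      rw [this]; exact hA.univ_mem
    · have : (constAct x : S → V) ⁻¹' {v} = ∅ := by
        ext s; simp [constAct, h]
      rw [this]; exact hA.empty_mem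

lemma uAct_simple (hA : IsSetAlg 𝓐) {X : Set V} {f : S → V} (hf : f ∈ Acts 𝓐 X)
    (u : V → ℝ) : IsSimpleFn 𝓐 (uAct u f) := by
  classical
  obtain ⟨hXmem, hfin, hpre⟩ := hf
  constructor
  · have : Set.range (uAct u f) = u '' Set.range f := by
      rw [show uAct u f = u ∘ f from rfl, Set.range_comp]
    rw [this]; exact hfin.image u
  · intro t
    have : (uAct u f) ⁻¹' {t} =
        ⋃ v ∈ hfin.toFinset.filter (fun v => u v = t), f ⁻¹' {v} := by
      ext s
      simp only [Set.mem_preimage, Set.mem_singleton_iff, Set.mem_iUnion,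
        Finset.mem_filter, Set.Finite.mem_toFinset]
      constructor
      · intro h; exact ⟨f s, ⟨⟨s, rfl⟩, h⟩, rfl⟩
      · rintro ⟨v, ⟨_, hv⟩, rfl⟩; exact hv
    rw [this]
    exact hA.biUnion_mem _ _ fun v _ => hpre v



-- ### value-level lemmas

lemma minPVal_le_of_mem {P : Set (Set S → ℝ)} {p : Set S → ℝ} (hp : p ∈ P)
    (φ : S → ℝ) : minPVal P φ ≤ (fint p φ : EReal) :=
  iInf₂_le p hp

lemma le_maxQVal_of_mem {Q : Set (Set S → ℝ)} {q : Set S → ℝ} (hq : q ∈ Q)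
    (φ : S → ℝ) : (fint q φ : EReal) ≤ maxQVal Q φ :=
  le_iSup₂ (f := fun q _ => (fint q φ : EReal)) q hq

lemma minPVal_le_maxminPVal {Pfam : Set (Set (Set S → ℝ))} {P : Set (Set S → ℝ)}
    (hP : P ∈ Pfam) (φ : S → ℝ) : minPVal P φ ≤ maxminPVal Pfam φ :=
  le_iSup₂ (f := fun P _ => minPVal P φ) P hP

lemma maxQVal_le {Q : Set (Set S → ℝ)} {c : EReal} (φ : S → ℝ)
    (h : ∀ q ∈ Q, (fint q φ : EReal) ≤ c) : maxQVal Q φ ≤ c :=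
  iSup₂_le h

lemma maxminPVal_const [Nonempty S] {𝓐 : Set (Set S)} {Pfam : Set (Set (Set S → ℝ))}
    (hfam : IsPriorFamily 𝓐 Pfam) (c : ℝ) :
    maxminPVal Pfam (fun _ : S => c) = (c : EReal) := by
  have hval : ∀ P ∈ Pfam, minPVal P (fun _ : S => c) = (c : EReal) := by
    intro P hP
    obtain ⟨hPΔ, ⟨p₀, hp₀⟩, _, _⟩ := hfam.2 P hP
    refine le_antisymm ?_ ?_
    · have := minPVal_le_of_mem hp₀ (fun _ : S => c)
      rwa [fint_const (hPΔ hp₀).1 c] at this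
    · refine le_iInf₂ fun p hp => ?_
      rw [fint_const (hPΔ hp).1 c]
  obtain ⟨P₀, hP₀⟩ := hfam.1
  refine le_antisymm (iSup₂_le fun P hP => (hval P hP).le) ?_
  rw [← hval P₀ hP₀]
  exact minPVal_le_maxminPVal hP₀ _

/-- The maxmin value of an act equals the utility of its certainty equivalent. -/
lemma maxmin_eq_CE [Nonempty S] {𝓐 : Set (Set S)} {X : Set V}
    {R : (S → V) → (S → V) → Prop} {u : V → ℝ} {Pfam : Set (Set (Set S → ℝ))}
    {xf : (S → V) → V} (hA : IsSetAlg 𝓐) (hfam : IsPriorFamily 𝓐 Pfam)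
    (hrep : PRep 𝓐 X R u Pfam) (hxf : IsCE 𝓐 X R xf)
    {f : S → V} (hf : f ∈ Acts 𝓐 X) :
    maxminPVal Pfam (uAct u f) = (u (xf f) : EReal) := by
  obtain ⟨hxfX, hRf, hRb⟩ := hxf f hf
  have hcm : constAct (xf f) ∈ Acts 𝓐 X := constAct_mem hA hxfX
  have hconstval : maxminPVal Pfam (uAct u (constAct (xf f))) = (u (xf f) : EReal) :=
    maxminPVal_const hfam (u (xf f))
  have h1 := (hrep f hf (constAct (xf f)) hcm).1 hRf
  have h2 := (hrep (constAct (xf f)) hcm f hf).1 hRb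
  rw [hconstval] at h1 h2
  exact le_antisymm h2 h1

-- ### cardinal equivalence from comparative ambiguity aversion

lemma affine_compare {X : Set V} (hXc : Convex ℝ X) {u₁ u₂ : V → ℝ}
    (hu₁ : IsNonconstAffine X u₁) (hu₂ : IsNonconstAffine X u₂)
    (hmono : ∀ x ∈ X, ∀ y ∈ X, u₂ y ≤ u₂ x → u₁ y ≤ u₁ x) :
    CardEquiv X u₁ u₂ := by
  have keq : ∀ x ∈ X, ∀ y ∈ X, u₂ y = u₂ x → u₁ y = u₁ x := fun x hx y hy h =>
    le_antisymm (hmono x hx y hy h.le) (hmono y hy x hx h.ge)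
  -- get x₀ y₀ with u₂ y₀ < u₂ x₀
  obtain ⟨x₀', hx₀', y₀', hy₀', hne⟩ := hu₂.2
  obtain ⟨x₀, hx₀, y₀, hy₀, hlt⟩ :
      ∃ x₀ ∈ X, ∃ y₀ ∈ X, u₂ y₀ < u₂ x₀ := by
    rcases hne.lt_or_gt with h | h
    · exact ⟨y₀', hy₀', x₀', hx₀', h⟩
    · exact ⟨x₀', hx₀', y₀', hy₀', h⟩
  set r := u₂ x₀ with hr
  set s := u₂ y₀ with hs
  have hd : (0:ℝ) < r - s := by linarith
  have hdne : r - s ≠ 0 := ne_of_gt hd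
  set Δu := u₁ x₀ - u₁ y₀ with hΔu
  have hΔnn : 0 ≤ Δu := by
    have := hmono x₀ hx₀ y₀ hy₀ hlt.le
    simp only [hΔu]; linarith
  set a' := Δu / (r - s) with ha'
  have ha'nn : 0 ≤ a' := div_nonneg hΔnn hd.le
  -- the key identity
  have key : ∀ z ∈ X, (r - s) * u₁ z = Δu * (u₂ z - s) + (r - s) * u₁ y₀ := by
    intro z hz
    set w := u₂ z with hw
    rcases lt_or_ge w s with hws | hws
    · -- w < s : s = t w + (1-t) r with t = (r-s)/(r-w)
      have he : (0:ℝ) < r - w := by linarith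
      have hene : r - w ≠ 0 := ne_of_gt he
      set t := (r - s) / (r - w) with ht
      have ht0 : 0 ≤ t := div_nonneg hd.le he.le
      have ht1 : t ≤ 1 := by
        rw [ht, div_le_one he]; linarith
      have hmem : t • z + (1 - t) • x₀ ∈ X := hXc hz hx₀ ht0 (by linarith) (by ring)
      have hval2 : u₂ (t • z + (1 - t) • x₀) = t * w + (1 - t) * r :=
        hu₂.1 z hz x₀ hx₀ t ⟨ht0, ht1⟩
      have hval1 : u₁ (t • z + (1 - t) • x₀) = t * u₁ z + (1 - t) * u₁ x₀ :=
        hu₁.1 z hz x₀ hx₀ t ⟨ht0, ht1⟩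
      have htw : t * (r - w) = r - s := div_mul_cancel₀ _ hene
      have hm2 : u₂ (t • z + (1 - t) • x₀) = u₂ y₀ := by
        rw [hval2]; rw [ht]; field_simp; ring
      have hm1 : t * u₁ z + (1 - t) * u₁ x₀ = u₁ y₀ := by
        rw [← hval1]; exact keq y₀ hy₀ _ hmem hm2
      -- multiply hm1 by (r-w)
      have hm1' : (r - s) * u₁ z + ((r - w) - (r - s)) * u₁ x₀ = (r - w) * u₁ y₀ := by
        have := congrArg (fun y => (r - w) * y) hm1
        rw [ht] at this
        field_simp at this
        linarith [this]
      simp only [hΔu]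
      linarith [hm1']
    rcases le_or_gt w r with hwr | hwr
    · -- s ≤ w ≤ r
      set t := (w - s) / (r - s) with ht
      have ht0 : 0 ≤ t := div_nonneg (by linarith) hd.le
      have ht1 : t ≤ 1 := by rw [ht, div_le_one hd]; linarith
      have hmem : t • x₀ + (1 - t) • y₀ ∈ X := hXc hx₀ hy₀ ht0 (by linarith) (by ring)
      have hval2 : u₂ (t • x₀ + (1 - t) • y₀) = t * r + (1 - t) * s :=
        hu₂.1 x₀ hx₀ y₀ hy₀ t ⟨ht0, ht1⟩
      have hval1 : u₁ (t • x₀ + (1 - t) • y₀) = t * u₁ x₀ + (1 - t) * u₁ y₀ :=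
        hu₁.1 x₀ hx₀ y₀ hy₀ t ⟨ht0, ht1⟩
      have hm2 : u₂ (t • x₀ + (1 - t) • y₀) = u₂ z := by
        rw [hval2, ht]; field_simp; ring
      have hm1 : u₁ z = t * u₁ x₀ + (1 - t) * u₁ y₀ := by
        rw [← hval1]; exact keq _ hmem z hz hm2.symm
      have := congrArg (fun y => (r - s) * y) hm1
      rw [ht] at this
      field_simp at this
      simp only [hΔu]
      linarith [this]
    · -- r < w
      have he : (0:ℝ) < w - s := by linarith
      have hene : w - s ≠ 0 := ne_of_gt he
      set t := (r - s) / (w - s) with ht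
      have ht0 : 0 ≤ t := div_nonneg hd.le he.le
      have ht1 : t ≤ 1 := by rw [ht, div_le_one he]; linarith
      have hmem : t • z + (1 - t) • y₀ ∈ X := hXc hz hy₀ ht0 (by linarith) (by ring)
      have hval2 : u₂ (t • z + (1 - t) • y₀) = t * w + (1 - t) * s :=
        hu₂.1 z hz y₀ hy₀ t ⟨ht0, ht1⟩
      have hval1 : u₁ (t • z + (1 - t) • y₀) = t * u₁ z + (1 - t) * u₁ y₀ :=
        hu₁.1 z hz y₀ hy₀ t ⟨ht0, ht1⟩
      have hm2 : u₂ (t • z + (1 - t) • y₀) = u₂ x₀ := by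
        rw [hval2, ht]; field_simp; ring
      have hm1 : t * u₁ z + (1 - t) * u₁ y₀ = u₁ x₀ := by
        rw [← hval1]; exact keq x₀ hx₀ _ hmem hm2
      have := congrArg (fun y => (w - s) * y) hm1
      rw [ht] at this
      field_simp at this
      simp only [hΔu]
      linarith [this]
  -- a' ≠ 0, else u₁ constant
  have ha'pos : 0 < Δu := by
    rcases lt_or_eq_of_le hΔnn with h | h
    · exact h
    · exfalso
      obtain ⟨x, hx, y, hy, hne1⟩ := hu₁.2
      have hx' := key x hx
      have hy' := key y hy
      rw [← h] at hx' hy'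
      simp only [zero_mul, zero_add] at hx' hy'
      exact hne1 (mul_left_cancel₀ hdne (hx'.trans hy'.symm))
  -- conclude : u₂ z = ((r-s)/Δu) * u₁ z + (s - (r-s)/Δu * u₁ y₀)
  refine ⟨(r - s) / Δu, s - (r - s) / Δu * u₁ y₀, div_pos hd ha'pos, ?_⟩
  intro z hz
  have hk := key z hz
  have hΔne : Δu ≠ 0 := ne_of_gt ha'pos
  field_simp
  nlinarith [hk]


lemma Δset_convex_combo {𝓐 : Set (Set S)} {p q : Set S → ℝ}
    (hp : p ∈ Δset 𝓐) (hq : q ∈ Δset 𝓐) {α β : ℝ}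
    (hα : 0 ≤ α) (hβ : 0 ≤ β) (hαβ : α + β = 1) : α • p + β • q ∈ Δset 𝓐 := by
  refine ⟨?_, ?_, ?_, ?_⟩ <;>
    simp only [Pi.add_apply, Pi.smul_apply, smul_eq_mul]
  · rw [hp.1, hq.1]; linarith
  · intro A h
    exact add_nonneg (mul_nonneg hα (hp.2.1 A h)) (mul_nonneg hβ (hq.2.1 A h))
  · intro A h1 B h2 hd
    rw [hp.2.2.1 A h1 B h2 hd, hq.2.2.1 A h1 B h2 hd]; ring
  · intro A h
    rw [hp.2.2.2 A h, hq.2.2.2 A h]; ring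

-- ### the comparative statics lemmas

lemma star_of_MAA {𝓐 : Set (Set S)} {X : Set V} {R₁ R₂ : (S → V) → (S → V) → Prop}
    {u₁ : V → ℝ} {xf₁ xf₂ : (S → V) → V}
    (hA : IsSetAlg 𝓐) (h₁ : IBPref 𝓐 X R₁)
    (hconst₁ : ∀ x ∈ X, ∀ y ∈ X, (R₁ (constAct x) (constAct y) ↔ u₁ y ≤ u₁ x))
    (hxf₁ : IsCE 𝓐 X R₁ xf₁) (hxf₂ : IsCE 𝓐 X R₂ xf₂)
    (hMAA : MoreAmbiguityAverse 𝓐 X R₁ R₂)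
    {f : S → V} (hf : f ∈ Acts 𝓐 X) : u₁ (xf₁ f) ≤ u₁ (xf₂ f) := by
  obtain ⟨h2X, h2f, h2b⟩ := hxf₂ f hf
  obtain ⟨h1X, h1f, h1b⟩ := hxf₁ f hf
  have hR1 : R₁ (constAct (xf₂ f)) f := hMAA f hf (xf₂ f) h2X h2b
  have hR1' : R₁ (constAct (xf₂ f)) (constAct (xf₁ f)) :=
    h₁.transitive _ (constAct_mem hA h2X) f hf _ (constAct_mem hA h1X) hR1 h1f
  exact (hconst₁ _ h2X _ h1X).1 hR1'

lemma MAA_of_star {𝓐 : Set (Set S)} {X : Set V} {R₁ R₂ : (S → V) → (S → V) → Prop}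
    {u₁ u₂ : V → ℝ} {xf₁ xf₂ : (S → V) → V}
    (hA : IsSetAlg 𝓐) (h₁ : IBPref 𝓐 X R₁) (h₂ : IBPref 𝓐 X R₂)
    (hconst₁ : ∀ x ∈ X, ∀ y ∈ X, (R₁ (constAct x) (constAct y) ↔ u₁ y ≤ u₁ x))
    (hconst₂ : ∀ x ∈ X, ∀ y ∈ X, (R₂ (constAct x) (constAct y) ↔ u₂ y ≤ u₂ x))
    (hxf₁ : IsCE 𝓐 X R₁ xf₁) (hxf₂ : IsCE 𝓐 X R₂ xf₂)
    (hcard : CardEquiv X u₁ u₂)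
    (hstar : ∀ f ∈ Acts 𝓐 X, u₁ (xf₁ f) ≤ u₁ (xf₂ f)) :
    MoreAmbiguityAverse 𝓐 X R₁ R₂ := by
  intro f hf x hx hR2
  obtain ⟨a, b, ha, hab⟩ := hcard
  obtain ⟨h2X, h2f, h2b⟩ := hxf₂ f hf
  obtain ⟨h1X, h1f, h1b⟩ := hxf₁ f hf
  have hR2' : R₂ (constAct x) (constAct (xf₂ f)) :=
    h₂.transitive _ (constAct_mem hA hx) f hf _ (constAct_mem hA h2X) hR2 h2f
  have hu2 : u₂ (xf₂ f) ≤ u₂ x := (hconst₂ x hx _ h2X).1 hR2'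
  have hu1 : u₁ (xf₂ f) ≤ u₁ x := by
    rw [hab x hx, hab _ h2X] at hu2; nlinarith
  have hle : u₁ (xf₁ f) ≤ u₁ x := le_trans (hstar f hf) hu1
  have hR1c : R₁ (constAct x) (constAct (xf₁ f)) := (hconst₁ x hx _ h1X).2 hle
  exact h₁.transitive _ (constAct_mem hA hx) _ (constAct_mem hA h1X) f hf hR1c h1b

lemma star_of_P_incl [Nonempty S] {𝓐 : Set (Set S)} {X : Set V}
    {R₁ : (S → V) → (S → V) → Prop} {u₁ : V → ℝ} {xf₁ xf₂ : (S → V) → V}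
    {Pfam₁ : Set (Set (Set S → ℝ))}
    (hA : IsSetAlg 𝓐) (hfam₁ : IsPriorFamily 𝓐 Pfam₁)
    (hatt₁ : PAttained 𝓐 X u₁ Pfam₁) (hrep₁ : PRep 𝓐 X R₁ u₁ Pfam₁)
    (hxf₁ : IsCE 𝓐 X R₁ xf₁)
    (hincl : PstarOf 𝓐 X u₁ xf₁ ⊆ PstarOf 𝓐 X u₁ xf₂)
    {f : S → V} (hf : f ∈ Acts 𝓐 X) : u₁ (xf₁ f) ≤ u₁ (xf₂ f) := by
  have hsub : Pfam₁ ⊆ PstarOf 𝓐 X u₁ xf₁ := by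
    intro P hP
    obtain ⟨hPΔ, hPne, hPcv, hPcp⟩ := hfam₁.2 P hP
    refine ⟨hPΔ, hPne, hPcv, hPcp, fun g hg => ?_⟩
    calc minPVal P (uAct u₁ g) ≤ maxminPVal Pfam₁ (uAct u₁ g) :=
          minPVal_le_maxminPVal hP _
      _ = (u₁ (xf₁ g) : EReal) := maxmin_eq_CE hA hfam₁ hrep₁ hxf₁ hg
  obtain ⟨P, hP, hPeq⟩ := (hatt₁ f hf).2
  have h2 : minPVal P (uAct u₁ f) ≤ (u₁ (xf₂ f) : EReal) :=
    (hincl (hsub hP)).2.2.2.2 f hf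
  have h3 : (u₁ (xf₁ f) : EReal) ≤ (u₁ (xf₂ f) : EReal) := by
    rw [← maxmin_eq_CE hA hfam₁ hrep₁ hxf₁ hf, hPeq]; exact h2
  exact_mod_cast h3

lemma star_of_Q_incl [Nonempty S] {𝓐 : Set (Set S)} {X : Set V}
    {R₂ : (S → V) → (S → V) → Prop} {u₁ u₂ : V → ℝ} {xf₁ xf₂ : (S → V) → V}
    {Pfam₂ : Set (Set (Set S → ℝ))}
    (hA : IsSetAlg 𝓐) (hfam₂ : IsPriorFamily 𝓐 Pfam₂)
    (hatt₂ : PAttained 𝓐 X u₂ Pfam₂) (hrep₂ : PRep 𝓐 X R₂ u₂ Pfam₂)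
    (hxf₂ : IsCE 𝓐 X R₂ xf₂) (hcard : CardEquiv X u₁ u₂)
    (hincl : QstarOf 𝓐 X u₁ xf₂ ⊆ QstarOf 𝓐 X u₁ xf₁)
    {f : S → V} (hf : f ∈ Acts 𝓐 X) : u₁ (xf₁ f) ≤ u₁ (xf₂ f) := by
  obtain ⟨a, b, ha, hab⟩ := hcard
  have hane : a ≠ 0 := ne_of_gt ha
  have hconv : ∀ q ∈ Δset 𝓐, ∀ g ∈ Acts 𝓐 X,
      fint q (uAct u₂ g) = a * fint q (uAct u₁ g) + b := by
    intro q hq g hg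
    have heq : uAct u₂ g = fun s => a * (uAct u₁ g) s + b := by
      funext s; exact hab (g s) (hg.1 s)
    rw [heq]
    exact fint_affine hA hq (uAct_simple hA hg u₁) hane
  set Qf : Set (Set S → ℝ) :=
    {q | q ∈ Δset 𝓐 ∧ fint q (uAct u₁ f) ≤ u₁ (xf₂ f)} with hQfdef
  have hwit : ∀ g ∈ Acts 𝓐 X, ∃ q ∈ Qf, u₁ (xf₂ g) ≤ fint q (uAct u₁ g) := by
    intro g hg
    obtain ⟨P, hP, hPeq⟩ := (hatt₂ g hg).2
    obtain ⟨q, hqP, hqeq⟩ := (hatt₂ f hf).1 P hP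
    have hqΔ : q ∈ Δset 𝓐 := (hfam₂.2 P hP).1 hqP
    have h1 : (fint q (uAct u₂ f) : EReal) ≤ (u₂ (xf₂ f) : EReal) := by
      rw [← hqeq, ← maxmin_eq_CE hA hfam₂ hrep₂ hxf₂ hf]
      exact minPVal_le_maxminPVal hP _
    have h1' : fint q (uAct u₂ f) ≤ u₂ (xf₂ f) := by exact_mod_cast h1
    have hq1 : fint q (uAct u₁ f) ≤ u₁ (xf₂ f) := by
      rw [hconv q hqΔ f hf, hab _ (hxf₂ f hf).1] at h1'; nlinarith
    have h2 : (u₂ (xf₂ g) : EReal) ≤ (fint q (uAct u₂ g) : EReal) := by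
      rw [← maxmin_eq_CE hA hfam₂ hrep₂ hxf₂ hg, hPeq]
      exact minPVal_le_of_mem hqP _
    have h2' : u₂ (xf₂ g) ≤ fint q (uAct u₂ g) := by exact_mod_cast h2
    have hq2 : u₁ (xf₂ g) ≤ fint q (uAct u₁ g) := by
      rw [hconv q hqΔ g hg, hab _ (hxf₂ g hg).1] at h2'; nlinarith
    exact ⟨q, ⟨hqΔ, hq1⟩, hq2⟩
  have hQfmem : Qf ∈ QstarOf 𝓐 X u₁ xf₂ := by
    obtain ⟨q₀, hq₀, _⟩ := hwit f hf
    refine ⟨fun q hq => hq.1, ⟨q₀, hq₀⟩, ?_, ?_, ?_⟩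
    · intro p hp q hq α β hα hβ hαβ
      refine ⟨Δset_convex_combo hp.1 hq.1 hα hβ hαβ, ?_⟩
      rw [fint_smul_add (uAct_simple hA hf u₁).1]
      have h1 := mul_le_mul_of_nonneg_left hp.2 hα
      have h2 := mul_le_mul_of_nonneg_left hq.2 hβ
      have h3 : α * u₁ (xf₂ f) + β * u₁ (xf₂ f) = u₁ (xf₂ f) := by
        rw [← add_mul, hαβ, one_mul]
      linarith
    · exact compact_constraint hA (uAct_simple hA hf u₁) _
    · intro g hg
      obtain ⟨q, hq, hle⟩ := hwit g hg
      calc (u₁ (xf₂ g) : EReal) ≤ (fint q (uAct u₁ g) : EReal) := by exact_mod_cast hle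
        _ ≤ maxQVal Qf (uAct u₁ g) := le_maxQVal_of_mem hq _
  have hlow : (u₁ (xf₁ f) : EReal) ≤ maxQVal Qf (uAct u₁ f) :=
    (hincl hQfmem).2.2.2.2 f hf
  have hup : maxQVal Qf (uAct u₁ f) ≤ (u₁ (xf₂ f) : EReal) :=
    maxQVal_le _ fun q hq => by exact_mod_cast hq.2
  have : (u₁ (xf₁ f) : EReal) ≤ (u₁ (xf₂ f) : EReal) := le_trans hlow hup
  exact_mod_cast this

end AuxiliaryLemmas

theorem stmt18 {S V : Type*} [Nonempty S] [AddCommGroup V] [Module ℝ V]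
    (𝓐 : Set (Set S)) (hA : IsSetAlg 𝓐)
    (X : Set V) (hX : X.Nonempty) (hXc : Convex ℝ X)
    (R₁ R₂ : (S → V) → (S → V) → Prop)
    (h₁ : IBPref 𝓐 X R₁) (h₂ : IBPref 𝓐 X R₂)
    (u₁ u₂ : V → ℝ) (hu₁ : IsNonconstAffine X u₁) (hu₂ : IsNonconstAffine X u₂)
    (h0₁ : (0 : ℝ) ∈ interior (u₁ '' X)) (h0₂ : (0 : ℝ) ∈ interior (u₂ '' X))
    (hrep₁ : ∃ Pfam : Set (Set (Set S → ℝ)), IsPriorFamily 𝓐 Pfam ∧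
      PAttained 𝓐 X u₁ Pfam ∧ PRep 𝓐 X R₁ u₁ Pfam)
    (hrep₂ : ∃ Pfam : Set (Set (Set S → ℝ)), IsPriorFamily 𝓐 Pfam ∧
      PAttained 𝓐 X u₂ Pfam ∧ PRep 𝓐 X R₂ u₂ Pfam)
    (hconst₁ : ∀ x ∈ X, ∀ y ∈ X, (R₁ (constAct x) (constAct y) ↔ u₁ y ≤ u₁ x))
    (hconst₂ : ∀ x ∈ X, ∀ y ∈ X, (R₂ (constAct x) (constAct y) ↔ u₂ y ≤ u₂ x))
    (xf₁ xf₂ : (S → V) → V) (hxf₁ : IsCE 𝓐 X R₁ xf₁) (hxf₂ : IsCE 𝓐 X R₂ xf₂) :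
    (MoreAmbiguityAverse 𝓐 X R₁ R₂ ↔
      (CardEquiv X u₁ u₂ ∧ PstarOf 𝓐 X u₁ xf₁ ⊆ PstarOf 𝓐 X u₁ xf₂)) ∧
    (MoreAmbiguityAverse 𝓐 X R₁ R₂ ↔
      (CardEquiv X u₁ u₂ ∧ QstarOf 𝓐 X u₁ xf₂ ⊆ QstarOf 𝓐 X u₁ xf₁)) := by
  obtain ⟨Pfam₁, hfam₁, hatt₁, hPrep₁⟩ := hrep₁
  obtain ⟨Pfam₂, hfam₂, hatt₂, hPrep₂⟩ := hrep₂
  have hMAAtoCard : MoreAmbiguityAverse 𝓐 X R₁ R₂ → CardEquiv X u₁ u₂ := by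
    intro hMAA
    refine affine_compare hXc hu₁ hu₂ ?_
    intro x hx y hy hle
    have hR2 : R₂ (constAct x) (constAct y) := (hconst₂ x hx y hy).2 hle
    have hR1 : R₁ (constAct x) (constAct y) :=
      hMAA (constAct y) (constAct_mem hA hy) x hx hR2
    exact (hconst₁ x hx y hy).1 hR1
  constructor
  · constructor
    · intro hMAA
      refine ⟨hMAAtoCard hMAA, ?_⟩
      intro P hP
      obtain ⟨hPΔ, hPne, hPcv, hPcp, hPval⟩ := hP
      refine ⟨hPΔ, hPne, hPcv, hPcp, fun g hg => ?_⟩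
      refine le_trans (hPval g hg) ?_
      have := star_of_MAA hA h₁ hconst₁ hxf₁ hxf₂ hMAA hg
      exact_mod_cast this
    · rintro ⟨hcard, hincl⟩
      exact MAA_of_star hA h₁ h₂ hconst₁ hconst₂ hxf₁ hxf₂ hcard
        (fun f hf => star_of_P_incl hA hfam₁ hatt₁ hPrep₁ hxf₁ hincl hf)
  · constructor
    · intro hMAA
      refine ⟨hMAAtoCard hMAA, ?_⟩
      intro Q hQ
      obtain ⟨hQΔ, hQne, hQcv, hQcp, hQval⟩ := hQ
      refine ⟨hQΔ, hQne, hQcv, hQcp, fun g hg => ?_⟩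
      refine le_trans ?_ (hQval g hg)
      have := star_of_MAA hA h₁ hconst₁ hxf₁ hxf₂ hMAA hg
      exact_mod_cast this
    · rintro ⟨hcard, hincl⟩
      exact MAA_of_star hA h₁ h₂ hconst₁ hconst₂ hxf₁ hxf₂ hcard
        (fun f hf => star_of_Q_incl hA hfam₂ hatt₂ hPrep₂ hxf₂ hcard hincl hf)


end Paper
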